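/- Boundary conditions from the integral equation: let z : [0,T] → ℝ be continuous and suppose there is a constant c₀ with (γ/(2η)) ∫₀ᵀ z(s) e^{−ρ|t−s|} ds + z(t) = c₀ for all t ∈ [0,T]. Then z is differentiable at 0 and at T with z'(0) = −ρ (c₀ − z(0)) and z'(T) = ρ (c₀ − z(T)). -/

import Mathlib

open Set

/-- Boundary conditions from the integral equation: if a continuous `z : [0,T] → ℝ` satisfies
`(γ/(2η)) ∫₀ᵀ z(s) e^{-ρ|t-s|} ds + z(t) = c₀` on `[0,T]`, then `z` is differentiable at `0`
and at `T` (within `[0,T]`) with `z'(0) = -ρ(c₀ - z(0))` and `z'(T) = ρ(c₀ - z(T))`. -/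
theorem stmt_14 (T η γ ρ : ℝ) (hT : 0 < T) (hη : 0 < η) (hγ : 0 < γ) (hρ : 0 < ρ)
    (z : ℝ → ℝ) (hz : ContinuousOn z (Icc 0 T)) (c₀ : ℝ)
    (heq : ∀ t ∈ Icc (0:ℝ) T,
      γ / (2 * η) * (∫ s in (0:ℝ)..T, z s * Real.exp (-ρ * |t - s|)) + z t = c₀) :
    HasDerivWithinAt z (-(ρ * (c₀ - z 0))) (Icc 0 T) 0 ∧
    HasDerivWithinAt z (ρ * (c₀ - z T)) (Icc 0 T) T := by
  set k : ℝ := γ / (2 * η) with hk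
  set g₁ : ℝ → ℝ := fun s => z s * Real.exp (ρ * s) with hg₁def
  set g₂ : ℝ → ℝ := fun s => z s * Real.exp (-ρ * s) with hg₂def
  have hg₁c : ContinuousOn g₁ (Icc 0 T) :=
    hz.mul (Real.continuous_exp.comp (continuous_const.mul continuous_id)).continuousOn
  have hg₂c : ContinuousOn g₂ (Icc 0 T) :=
    hz.mul (Real.continuous_exp.comp (continuous_const.mul continuous_id)).continuousOn
  set C : ℝ := ∫ s in (0:ℝ)..T, g₂ s with hCdef
  set F : ℝ → ℝ := fun t =>
    Real.exp (-ρ * t) * (∫ s in (0:ℝ)..t, g₁ s)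
      + Real.exp (ρ * t) * (C - ∫ s in (0:ℝ)..t, g₂ s) with hFdef
  -- interval integrability helpers
  have hsub : ∀ a b : ℝ, a ∈ Icc (0:ℝ) T → b ∈ Icc (0:ℝ) T → uIcc a b ⊆ Icc 0 T :=
    fun a b ha hb => uIcc_subset_Icc ha hb
  have hi₁ : ∀ a b : ℝ, a ∈ Icc (0:ℝ) T → b ∈ Icc (0:ℝ) T →
      IntervalIntegrable g₁ MeasureTheory.volume a b :=
    fun a b ha hb => (hg₁c.mono (hsub a b ha hb)).intervalIntegrable
  have hi₂ : ∀ a b : ℝ, a ∈ Icc (0:ℝ) T → b ∈ Icc (0:ℝ) T →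
      IntervalIntegrable g₂ MeasureTheory.volume a b :=
    fun a b ha hb => (hg₂c.mono (hsub a b ha hb)).intervalIntegrable
  have h0T : (0:ℝ) ∈ Icc (0:ℝ) T := ⟨le_refl 0, hT.le⟩
  have hTT : T ∈ Icc (0:ℝ) T := ⟨hT.le, le_refl T⟩
  -- the key identity
  have hF : ∀ t ∈ Icc (0:ℝ) T,
      (∫ s in (0:ℝ)..T, z s * Real.exp (-ρ * |t - s|)) = F t := by
    intro t ht
    have htI : t ∈ Icc (0:ℝ) T := ht
    have hcontw : ContinuousOn (fun s => z s * Real.exp (-ρ * |t - s|)) (Icc 0 T) :=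
      hz.mul (Real.continuous_exp.comp
        (continuous_const.mul ((continuous_const.sub continuous_id).abs))).continuousOn
    have hiw1 : IntervalIntegrable (fun s => z s * Real.exp (-ρ * |t - s|))
        MeasureTheory.volume 0 t := (hcontw.mono (hsub 0 t h0T htI)).intervalIntegrable
    have hiw2 : IntervalIntegrable (fun s => z s * Real.exp (-ρ * |t - s|))
        MeasureTheory.volume t T := (hcontw.mono (hsub t T htI hTT)).intervalIntegrable
    have hsplit := intervalIntegral.integral_add_adjacent_intervals hiw1 hiw2
    rw [← hsplit]
    have h1 : (∫ s in (0:ℝ)..t, z s * Real.exp (-ρ * |t - s|))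
        = Real.exp (-ρ * t) * ∫ s in (0:ℝ)..t, g₁ s := by
      rw [← intervalIntegral.integral_const_mul]
      apply intervalIntegral.integral_congr
      intro s hs
      rw [uIcc_of_le ht.1] at hs
      have habs : |t - s| = t - s := abs_of_nonneg (by linarith [hs.2])
      show z s * Real.exp (-ρ * |t - s|) = Real.exp (-ρ * t) * (z s * Real.exp (ρ * s))
      rw [habs, show -ρ * (t - s) = -ρ * t + ρ * s by ring, Real.exp_add]
      ring
    have h2 : (∫ s in t..T, z s * Real.exp (-ρ * |t - s|))
        = Real.exp (ρ * t) * ∫ s in t..T, g₂ s := by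
      rw [← intervalIntegral.integral_const_mul]
      apply intervalIntegral.integral_congr
      intro s hs
      rw [uIcc_of_le ht.2] at hs
      have habs : |t - s| = s - t := by
        rw [abs_sub_comm]; exact abs_of_nonneg (by linarith [hs.1])
      show z s * Real.exp (-ρ * |t - s|) = Real.exp (ρ * t) * (z s * Real.exp (-ρ * s))
      rw [habs, show -ρ * (s - t) = ρ * t + -ρ * s by ring, Real.exp_add]
      ring
    have h3 : (∫ s in t..T, g₂ s) = C - ∫ s in (0:ℝ)..t, g₂ s := by
      have := intervalIntegral.integral_add_adjacent_intervals
        (hi₂ 0 t h0T htI) (hi₂ t T htI hTT)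
      rw [hCdef]; linarith [this]
    rw [h1, h2, h3, hFdef]
  -- z = c₀ - k * F on [0,T]
  have hzF : ∀ t ∈ Icc (0:ℝ) T, z t = c₀ - k * F t := by
    intro t ht
    have := heq t ht
    rw [hF t ht] at this
    linarith
  -- FTC derivatives within Icc 0 T
  haveI f0 : Fact ((0:ℝ) ∈ Icc (0:ℝ) T) := ⟨h0T⟩
  haveI fT : Fact (T ∈ Icc (0:ℝ) T) := ⟨hTT⟩
  have hm₁ := hg₁c.stronglyMeasurableAtFilter_nhdsWithin (μ := MeasureTheory.volume) measurableSet_Icc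
  have hm₂ := hg₂c.stronglyMeasurableAtFilter_nhdsWithin (μ := MeasureTheory.volume) measurableSet_Icc
  have hA₁0 : HasDerivWithinAt (fun u => ∫ s in (0:ℝ)..u, g₁ s) (g₁ 0) (Icc 0 T) 0 :=
    intervalIntegral.integral_hasDerivWithinAt_right (IntervalIntegrable.refl) (hm₁ 0)
      (hg₁c 0 h0T)
  have hA₂0 : HasDerivWithinAt (fun u => ∫ s in (0:ℝ)..u, g₂ s) (g₂ 0) (Icc 0 T) 0 :=
    intervalIntegral.integral_hasDerivWithinAt_right (IntervalIntegrable.refl) (hm₂ 0)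
      (hg₂c 0 h0T)
  have hA₁T : HasDerivWithinAt (fun u => ∫ s in (0:ℝ)..u, g₁ s) (g₁ T) (Icc 0 T) T :=
    intervalIntegral.integral_hasDerivWithinAt_right (hi₁ 0 T h0T hTT) (hm₁ T)
      (hg₁c T hTT)
  have hA₂T : HasDerivWithinAt (fun u => ∫ s in (0:ℝ)..u, g₂ s) (g₂ T) (Icc 0 T) T :=
    intervalIntegral.integral_hasDerivWithinAt_right (hi₂ 0 T h0T hTT) (hm₂ T)
      (hg₂c T hTT)
  -- exponential factors
  have he₁ : ∀ x : ℝ, HasDerivAt (fun t => Real.exp (-ρ * t))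
      (-ρ * Real.exp (-ρ * x)) x := by
    intro x
    have := ((hasDerivAt_id x).const_mul (-ρ)).exp
    simpa [mul_comm] using this
  have he₂ : ∀ x : ℝ, HasDerivAt (fun t => Real.exp (ρ * t))
      (ρ * Real.exp (ρ * x)) x := by
    intro x
    have := ((hasDerivAt_id x).const_mul ρ).exp
    simpa [mul_comm] using this
  have e1 : Real.exp (-ρ * T) * g₁ T = z T := by
    show Real.exp (-ρ * T) * (z T * Real.exp (ρ * T)) = z T
    rw [mul_comm (z T), ← mul_assoc, ← Real.exp_add, show -ρ * T + ρ * T = 0 by ring,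
      Real.exp_zero, one_mul]
  have e2 : Real.exp (ρ * T) * g₂ T = z T := by
    show Real.exp (ρ * T) * (z T * Real.exp (-ρ * T)) = z T
    rw [mul_comm (z T), ← mul_assoc, ← Real.exp_add, show ρ * T + -ρ * T = 0 by ring,
      Real.exp_zero, one_mul]
  -- derivative of F at 0
  have hF0 : HasDerivWithinAt F (ρ * C) (Icc 0 T) 0 := by
    have h := (((he₁ 0).hasDerivWithinAt.mul hA₁0)).add
      (((he₂ 0).hasDerivWithinAt).mul ((hasDerivWithinAt_const (0:ℝ) (Icc 0 T) C).sub hA₂0))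
    rw [hFdef]
    convert h using 1
    case e'_4 => rfl
    case e'_5 => rfl
    case e'_8 => rfl
    simp only [intervalIntegral.integral_same, mul_zero, neg_mul, neg_zero, zero_mul,
      Real.exp_zero, one_mul, sub_zero, zero_add, hg₁def, hg₂def, zero_sub, Pi.sub_apply]
    ring
  -- derivative of F at T
  have hFT : HasDerivWithinAt F (-(ρ * F T)) (Icc 0 T) T := by
    have h := (((he₁ T).hasDerivWithinAt.mul hA₁T)).add
      (((he₂ T).hasDerivWithinAt).mul ((hasDerivWithinAt_const T (Icc 0 T) C).sub hA₂T))
    rw [hFdef]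
    convert h using 1
    case e'_4 => rfl
    case e'_5 => rfl
    case e'_8 => rfl
    simp only [Pi.sub_apply]
    rw [← hCdef]
    simp only [hFdef, sub_self, mul_zero, add_zero, zero_sub, mul_neg]
    linarith [e1, e2]
  -- relate F values to z
  have hF0v : k * F 0 = c₀ - z 0 := by
    have := hzF 0 h0T; linarith
  have hFTv : k * F T = c₀ - z T := by
    have := hzF T hTT; linarith
  have hC0 : F 0 = C := by
    rw [hFdef]; simp
  constructor
  · have hd : HasDerivWithinAt (fun t => c₀ - k * F t) (-(k * (ρ * C))) (Icc 0 T) 0 :=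
      (hF0.const_mul k).const_sub c₀
    have hd' : HasDerivWithinAt (fun t => c₀ - k * F t) (-(ρ * (c₀ - z 0))) (Icc 0 T) 0 := by
      have : -(k * (ρ * C)) = -(ρ * (c₀ - z 0)) := by
        rw [← hF0v, ← hC0]; ring
      rwa [this] at hd
    exact hd'.congr (fun y hy => hzF y hy) (hzF 0 h0T)
  · have hd : HasDerivWithinAt (fun t => c₀ - k * F t) (-(k * (-(ρ * F T)))) (Icc 0 T) T :=
      (hFT.const_mul k).const_sub c₀
    have hd' : HasDerivWithinAt (fun t => c₀ - k * F t) (ρ * (c₀ - z T)) (Icc 0 T) T := by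
      have : -(k * (-(ρ * F T))) = ρ * (c₀ - z T) := by
        rw [← hFTv]; ring
      rwa [this] at hd
    exact hd'.congr (fun y hy => hzF y hy) (hzF T hTT)
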